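/- Fix b ∈ ℝ and s > 0. For every t > 0, the function F(t) = ∫₀^s ψ_{s+t}(y) dy is differentiable at t with derivative F′(t) = − e^{−b²(s+t)/2} · √s / (π·(s+t)·√t). -/

import Mathlib

open Real MeasureTheory Set Filter

/-- Standard Gaussian density φ(z) = (1/√(2π)) e^{−z²/2}. -/
noncomputable def gaussPdf (z : ℝ) : ℝ := (1 / Real.sqrt (2 * π)) * Real.exp (-z ^ 2 / 2)

/-- Standard Gaussian distribution function Φ(y) = ∫_{−∞}^y φ(z) dz. -/
noncomputable def gaussCdf (y : ℝ) : ℝ := ∫ z in Set.Iio y, gaussPdf z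

/-- ψ_t(u) = (e^{−b²u/2}/(π√(u(t−u)))) · [ e^{−b²(t−u)/2}
      + (b/2)·√(2π(t−u)) · (2Φ(b√(t−u)) − 1) ]. -/
noncomputable def psi (b t u : ℝ) : ℝ :=
  (Real.exp (-b ^ 2 * u / 2) / (π * Real.sqrt (u * (t - u)))) *
    (Real.exp (-b ^ 2 * (t - u) / 2) +
      (b / 2) * Real.sqrt (2 * π * (t - u)) *
        (2 * gaussCdf (b * Real.sqrt (t - u)) - 1))

/-- Inverse Gaussian first-passage density f_{τ₁}(t) = (|a−x|/t^{3/2}) φ((a+bt−x)/√t). -/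
noncomputable def invGaussPdf (a x b t : ℝ) : ℝ :=
  (|a - x| / t ^ ((3 : ℝ) / 2)) * gaussPdf ((a + b * t - x) / Real.sqrt t)

/- ### Auxiliary lemmas -/

lemma gaussPdf_cont : Continuous gaussPdf := by
  unfold gaussPdf; fun_prop

lemma gaussPdf_nonneg (z : ℝ) : 0 ≤ gaussPdf z := by
  unfold gaussPdf; positivity

lemma gaussPdf_integrable : Integrable gaussPdf := by
  have h : Integrable fun z : ℝ => Real.exp (-(1/2 : ℝ) * z ^ 2) :=
    integrable_exp_neg_mul_sq (by norm_num)
  have := h.const_mul (1 / Real.sqrt (2 * π))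
  refine this.congr (Eventually.of_forall fun z => ?_)
  unfold gaussPdf; ring_nf

lemma gaussPdf_integral : ∫ z, gaussPdf z = 1 := by
  have h : (∫ z : ℝ, Real.exp (-(1/2 : ℝ) * z ^ 2)) = Real.sqrt (π / (1/2)) :=
    integral_gaussian (1/2)
  have h2 : (∫ z, gaussPdf z) = (1 / Real.sqrt (2 * π)) * ∫ z : ℝ, Real.exp (-(1/2 : ℝ) * z ^ 2) := by
    rw [← MeasureTheory.integral_const_mul]
    congr 1; funext z; unfold gaussPdf; ring_nf
  rw [h2, h]
  have : π / (1/2 : ℝ) = 2 * π := by ring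
  rw [this]
  have hne : Real.sqrt (2 * π) ≠ 0 := by positivity
  field_simp

lemma gaussCdf_hasDerivAt (x : ℝ) : HasDerivAt gaussCdf (gaussPdf x) x := by
  have key : ∀ y : ℝ, gaussCdf y = gaussCdf 0 + ∫ z in (0:ℝ)..y, gaussPdf z := by
    intro y
    have := intervalIntegral.integral_Iic_sub_Iic (μ := volume) (f := gaussPdf)
      (gaussPdf_integrable.integrableOn) (gaussPdf_integrable.integrableOn) (a := 0) (b := y)
    have hIic : ∀ u : ℝ, (∫ z in Set.Iic u, gaussPdf z) = gaussCdf u := by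
      intro u
      rw [gaussCdf, ← MeasureTheory.integral_Iic_eq_integral_Iio]
    rw [hIic, hIic] at this
    linarith
  have hd : HasDerivAt (fun y => gaussCdf 0 + ∫ z in (0:ℝ)..y, gaussPdf z) (gaussPdf x) x := by
    refine HasDerivAt.const_add _ ?_
    exact intervalIntegral.integral_hasDerivAt_right
      (gaussPdf_integrable.intervalIntegrable)
      gaussPdf_cont.aestronglyMeasurable.stronglyMeasurableAtFilter
      gaussPdf_cont.continuousAt
  exact hd.congr_of_eventuallyEq (Eventually.of_forall key)

@[fun_prop]
lemma gaussCdf_cont : Continuous gaussCdf := by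
  rw [continuous_iff_continuousAt]
  exact fun x => (gaussCdf_hasDerivAt x).continuousAt

lemma gaussCdf_nonneg (y : ℝ) : 0 ≤ gaussCdf y :=
  integral_nonneg fun z => gaussPdf_nonneg z

lemma gaussCdf_le_one (y : ℝ) : gaussCdf y ≤ 1 := by
  rw [← gaussPdf_integral]
  exact setIntegral_le_integral gaussPdf_integrable
    (Eventually.of_forall fun z => gaussPdf_nonneg z)

lemma abs_two_cdf_sub_one (y : ℝ) : |2 * gaussCdf y - 1| ≤ 1 := by
  rw [abs_le]; constructor <;> nlinarith [gaussCdf_nonneg y, gaussCdf_le_one y]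

lemma psi_eq (b s y τ : ℝ) (hy : 0 < y) (hw : 0 < s + τ - y) :
    psi b (s + τ) y = (Real.exp (-b^2*y/2) / (π * Real.sqrt y)) *
      ((Real.sqrt (s+τ-y))⁻¹ * Real.exp (-b^2*(s+τ-y)/2) +
        (b/2) * Real.sqrt (2*π) * (2 * gaussCdf (b * Real.sqrt (s+τ-y)) - 1)) := by
  have h1 : Real.sqrt (y * (s + τ - y)) = Real.sqrt y * Real.sqrt (s+τ-y) :=
    Real.sqrt_mul hy.le _
  have h2 : Real.sqrt (2 * π * (s+τ-y)) = Real.sqrt (2*π) * Real.sqrt (s+τ-y) :=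
    Real.sqrt_mul (by positivity) _
  have hsy : Real.sqrt y ≠ 0 := by positivity
  have hsw : Real.sqrt (s+τ-y) ≠ 0 := by positivity
  have hπ : π ≠ 0 := Real.pi_ne_zero
  rw [psi]
  have hwe : s + τ - y = (s + τ) - y := by ring
  rw [← hwe, h1, h2]
  field_simp

lemma psi_hasDerivAt (b s y t' : ℝ) (hy : 0 < y) (hys : y ≤ s) (ht' : 0 < t') :
    HasDerivAt (fun τ => psi b (s + τ) y)
      (-(Real.exp (-b^2*(s+t')/2) / (2*π)) *
        ((Real.sqrt y)⁻¹ * ((Real.sqrt (s+t'-y))⁻¹ * (s+t'-y)⁻¹))) t' := by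
  set w := s + t' - y with hw_def
  have hw : 0 < w := by simp only [hw_def]; linarith
  have hsw : Real.sqrt w ≠ 0 := by positivity
  have hwne : w ≠ 0 := hw.ne'
  have hlin : HasDerivAt (fun τ : ℝ => s + τ - y) 1 t' := by
    simpa using ((hasDerivAt_id t').const_add s).sub_const y
  have hsq : HasDerivAt (fun τ => Real.sqrt (s + τ - y)) (1 / (2 * Real.sqrt w)) t' := by
    have := (Real.hasDerivAt_sqrt hwne).comp t' hlin
    simpa [Function.comp_def] using this
  have hinv : HasDerivAt (fun τ => (Real.sqrt (s + τ - y))⁻¹)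
      (-(1 / (2 * Real.sqrt w)) / (Real.sqrt w) ^ 2) t' := hsq.inv hsw
  have hE2 : HasDerivAt (fun τ => Real.exp (-b^2*(s+τ-y)/2))
      (Real.exp (-b^2*w/2) * (-b^2 * 1 / 2)) t' := by
    exact ((hlin.const_mul (-b^2)).div_const 2).exp
  have hΦ : HasDerivAt (fun τ => gaussCdf (b * Real.sqrt (s+τ-y)))
      (gaussPdf (b * Real.sqrt w) * (b * (1 / (2 * Real.sqrt w)))) t' :=
    (gaussCdf_hasDerivAt _).comp t' (hsq.const_mul b)
  have hsum : HasDerivAt (fun τ => (Real.sqrt (s+τ-y))⁻¹ * Real.exp (-b^2*(s+τ-y)/2) +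
        (b/2) * Real.sqrt (2*π) * (2 * gaussCdf (b * Real.sqrt (s+τ-y)) - 1))
      ((-(1 / (2 * Real.sqrt w)) / (Real.sqrt w) ^ 2) * Real.exp (-b^2*w/2) +
        (Real.sqrt w)⁻¹ * (Real.exp (-b^2*w/2) * (-b^2 * 1 / 2)) +
        (b/2) * Real.sqrt (2*π) *
          (2 * (gaussPdf (b * Real.sqrt w) * (b * (1 / (2 * Real.sqrt w)))))) t' := by
    exact (hinv.mul hE2).add ((((hΦ.const_mul 2).sub_const 1)).const_mul ((b/2) * Real.sqrt (2*π)))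
  have hmain := hsum.const_mul (Real.exp (-b^2*y/2) / (π * Real.sqrt y))
  have heq : (fun τ => (Real.exp (-b^2*y/2) / (π * Real.sqrt y)) *
      ((Real.sqrt (s+τ-y))⁻¹ * Real.exp (-b^2*(s+τ-y)/2) +
        (b/2) * Real.sqrt (2*π) * (2 * gaussCdf (b * Real.sqrt (s+τ-y)) - 1)))
      =ᶠ[nhds t'] (fun τ => psi b (s + τ) y) := by
    have hopen : ∀ᶠ τ in nhds t', 0 < s + τ - y := by
      have : ContinuousAt (fun τ : ℝ => s + τ - y) t' := by fun_prop
      exact this.eventually_const_lt hw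
    filter_upwards [hopen] with τ hτ
    exact (psi_eq b s y τ hy hτ).symm
  refine (hmain.congr_of_eventuallyEq heq.symm).congr_deriv ?_
  have hexp : Real.exp (-b^2*(s+t')/2) = Real.exp (-b^2*y/2) * Real.exp (-b^2*w/2) := by
    rw [← Real.exp_add]; congr 1; simp only [hw_def]; ring
  have hpdf : gaussPdf (b * Real.sqrt w) = (1 / Real.sqrt (2*π)) * Real.exp (-b^2*w/2) := by
    rw [gaussPdf]; congr 2
    rw [mul_pow, Real.sq_sqrt hw.le]; ring
  have hsq2 : (Real.sqrt w) ^ 2 = w := Real.sq_sqrt hw.le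
  have hsy : Real.sqrt y ≠ 0 := by positivity
  have hπ : π ≠ 0 := Real.pi_ne_zero
  have hs2π : Real.sqrt (2*π) ≠ 0 := by positivity
  rw [hexp, hpdf, ← hsq2]
  field_simp
  ring
  simp [hsq2]

lemma H_deriv (T y : ℝ) (hy : 0 < y) (hw : 0 < T - y) :
    HasDerivAt (fun z => 2 * Real.sqrt z / (T * Real.sqrt (T - z)))
      ((Real.sqrt y)⁻¹ * ((Real.sqrt (T - y))⁻¹ * (T - y)⁻¹)) y := by
  have hyne : y ≠ 0 := hy.ne'
  have hwne : T - y ≠ 0 := hw.ne'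
  have hsy : Real.sqrt y ≠ 0 := by positivity
  have hsw : Real.sqrt (T - y) ≠ 0 := by positivity
  have hT : 0 < T := by linarith
  have hlin : HasDerivAt (fun z : ℝ => T - z) (-1) y := by
    simpa using (hasDerivAt_id y).const_sub T
  have hsq : HasDerivAt (fun z => Real.sqrt (T - z)) (1 / (2 * Real.sqrt (T - y)) * (-1)) y :=
    (Real.hasDerivAt_sqrt hwne).comp y hlin
  have hden : HasDerivAt (fun z => T * Real.sqrt (T - z)) (T * (1 / (2 * Real.sqrt (T - y)) * (-1))) y :=
    hsq.const_mul T
  have hnum : HasDerivAt (fun z => 2 * Real.sqrt z) (2 * (1 / (2 * Real.sqrt y))) y :=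
    (Real.hasDerivAt_sqrt hyne).const_mul 2
  have hdenne : T * Real.sqrt (T - y) ≠ 0 := by positivity
  have := hnum.div hden hdenne
  refine this.congr_deriv ?_
  have ha : Real.sqrt y ^ 2 = y := Real.sq_sqrt hy.le
  have hc : Real.sqrt (T - y) ^ 2 = T - y := Real.sq_sqrt hw.le
  field_simp
  linear_combination (T - y) * ha + (-y) * hc

lemma sqrt_inv_integrableOn (s : ℝ) (hs : 0 < s) :
    IntegrableOn (fun y => (Real.sqrt y)⁻¹) (Ioc 0 s) volume := by
  have h : IntervalIntegrable (fun x : ℝ => x ^ (-(1/2) : ℝ)) volume 0 s :=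
    intervalIntegral.intervalIntegrable_rpow' (by norm_num)
  rw [intervalIntegrable_iff_integrableOn_Ioc_of_le hs.le] at h
  refine h.congr_fun (fun y hy => ?_) measurableSet_Ioc
  beta_reduce
  rw [Real.rpow_neg hy.1.le, ← Real.sqrt_eq_rpow]

lemma key_integral (s t : ℝ) (hs : 0 < s) (ht : 0 < t) :
    (∫ y in (0:ℝ)..s, (Real.sqrt y)⁻¹ * ((Real.sqrt (s + t - y))⁻¹ * (s + t - y)⁻¹))
      = 2 * Real.sqrt s / ((s + t) * Real.sqrt t) := by
  set T := s + t with hT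
  have hTpos : 0 < T := by positivity
  have hcont : ContinuousOn (fun z => 2 * Real.sqrt z / (T * Real.sqrt (T - z))) (Icc 0 s) := by
    apply ContinuousOn.div
    · fun_prop
    · fun_prop
    · intro z hz
      have : 0 < T - z := by have := hz.2; simp only [hT]; linarith
      positivity
  have hderiv : ∀ z ∈ Ioo 0 s, HasDerivWithinAt (fun z => 2 * Real.sqrt z / (T * Real.sqrt (T - z)))
      ((Real.sqrt z)⁻¹ * ((Real.sqrt (T - z))⁻¹ * (T - z)⁻¹)) (Ioi z) z := by
    intro z hz
    exact (H_deriv T z hz.1 (by simp only [hT]; nlinarith [hz.2])).hasDerivWithinAt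
  have hint : IntervalIntegrable (fun z => (Real.sqrt z)⁻¹ * ((Real.sqrt (T - z))⁻¹ * (T - z)⁻¹))
      volume 0 s := by
    rw [intervalIntegrable_iff_integrableOn_Ioc_of_le hs.le]
    have hb := (sqrt_inv_integrableOn s hs).const_mul ((Real.sqrt t)⁻¹ * t⁻¹)
    refine Integrable.mono hb ?_ ?_
    · apply ContinuousOn.aestronglyMeasurable _ measurableSet_Ioc
      apply ContinuousOn.mul
      · apply ContinuousOn.inv₀ (by fun_prop)
        intro z hz; have := hz.1; positivity
      · apply ContinuousOn.mul
        · apply ContinuousOn.inv₀ (by fun_prop)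
          intro z hz
          have : 0 < T - z := by have := hz.2; simp only [hT]; linarith
          positivity
        · apply ContinuousOn.inv₀ (by fun_prop)
          intro z hz
          have : 0 < T - z := by have := hz.2; simp only [hT]; linarith
          exact this.ne'
    · refine (ae_restrict_iff' measurableSet_Ioc).2 (Eventually.of_forall fun z hz => ?_)
      have hz1 : 0 < z := hz.1
      have hz2 : z ≤ s := hz.2
      have hwz : t ≤ T - z := by simp only [hT]; linarith
      have hwpos : 0 < T - z := lt_of_lt_of_le ht hwz
      rw [Real.norm_eq_abs, Real.norm_eq_abs, abs_of_nonneg (by positivity),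
        abs_of_nonneg (by positivity)]
      have h1 : (Real.sqrt (T - z))⁻¹ ≤ (Real.sqrt t)⁻¹ :=
        inv_anti₀ (Real.sqrt_pos.2 ht) (Real.sqrt_le_sqrt hwz)
      have h2 : (T - z)⁻¹ ≤ t⁻¹ := inv_anti₀ ht (by linarith)
      calc (Real.sqrt z)⁻¹ * ((Real.sqrt (T - z))⁻¹ * (T - z)⁻¹)
          ≤ (Real.sqrt z)⁻¹ * ((Real.sqrt t)⁻¹ * t⁻¹) :=
            mul_le_mul_of_nonneg_left
              (mul_le_mul h1 h2 (by positivity) (by positivity)) (by positivity)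
        _ = (Real.sqrt t)⁻¹ * t⁻¹ * (Real.sqrt z)⁻¹ := by ring
  have := intervalIntegral.integral_eq_sub_of_hasDeriv_right_of_le hs.le hcont hderiv hint
  rw [this]
  have h0 : Real.sqrt (0:ℝ) = 0 := Real.sqrt_zero
  have hTs : T - s = t := by simp only [hT]; ring
  rw [hTs, h0]
  ring

lemma psi_contOn (b s τ : ℝ) (hs : 0 < s) (hτ : 0 < τ) :
    ContinuousOn (fun y => psi b (s + τ) y) (Ioc 0 s) := by
  unfold psi
  apply ContinuousOn.mul
  · apply ContinuousOn.div (by fun_prop) (by fun_prop)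
    intro y hy
    have h1 : 0 < y := hy.1
    have h2 : 0 < s + τ - y := by have := hy.2; linarith
    have : 0 < y * (s + τ - y) := by positivity
    positivity
  · fun_prop

lemma psi_bound (b s t : ℝ) (hs : 0 < s) (ht : 0 < t) (y : ℝ) (hy : y ∈ Ioc 0 s) :
    |psi b (s + t) y| ≤
      (π * Real.sqrt t)⁻¹ * (1 + (|b|/2) * Real.sqrt (2*π*(s+t))) * (Real.sqrt y)⁻¹ := by
  have hy1 : 0 < y := hy.1
  have hy2 : y ≤ s := hy.2
  have hw : 0 < s + t - y := by linarith
  have hwt : t ≤ s + t - y := by linarith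
  have hwst : s + t - y ≤ s + t := by linarith
  have hwe : s + t - y = (s + t) - y := by ring
  rw [psi, ← hwe, abs_mul]
  have hA : |Real.exp (-b ^ 2 * y / 2) / (π * Real.sqrt (y * (s + t - y)))|
      ≤ 1 / (π * (Real.sqrt y * Real.sqrt t)) := by
    rw [abs_of_nonneg (by positivity)]
    apply div_le_div₀ (by norm_num) (Real.exp_le_one_iff.2 (by nlinarith [sq_nonneg b]))
      (by positivity)
    rw [Real.sqrt_mul hy1.le]
    have h1 : Real.sqrt t ≤ Real.sqrt (s + t - y) := Real.sqrt_le_sqrt hwt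
    have h0 : 0 ≤ Real.sqrt y := Real.sqrt_nonneg y
    exact mul_le_mul_of_nonneg_left (mul_le_mul_of_nonneg_left h1 h0) Real.pi_pos.le
  have hB : |Real.exp (-b ^ 2 * (s + t - y) / 2) +
        (b / 2) * Real.sqrt (2 * π * (s + t - y)) *
          (2 * gaussCdf (b * Real.sqrt (s + t - y)) - 1)|
      ≤ 1 + (|b|/2) * Real.sqrt (2*π*(s+t)) := by
    refine (abs_add_le _ _).trans ?_
    have h1 : |Real.exp (-b ^ 2 * (s + t - y) / 2)| ≤ 1 := by
      rw [abs_of_nonneg (Real.exp_nonneg _)]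
      exact Real.exp_le_one_iff.2 (by nlinarith [sq_nonneg b])
    have h2 : |(b / 2) * Real.sqrt (2 * π * (s + t - y)) *
          (2 * gaussCdf (b * Real.sqrt (s + t - y)) - 1)|
        ≤ (|b|/2) * Real.sqrt (2*π*(s+t)) := by
      rw [abs_mul, abs_mul, abs_div, abs_two]
      have hc := abs_two_cdf_sub_one (b * Real.sqrt (s + t - y))
      have hsq : |Real.sqrt (2 * π * (s + t - y))| ≤ Real.sqrt (2*π*(s+t)) := by
        rw [abs_of_nonneg (Real.sqrt_nonneg _)]
        apply Real.sqrt_le_sqrt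
        nlinarith [Real.pi_pos]
      calc |b| / 2 * |Real.sqrt (2 * π * (s + t - y))| * |2 * gaussCdf (b * Real.sqrt (s + t - y)) - 1|
          ≤ |b| / 2 * Real.sqrt (2*π*(s+t)) * 1 := by
            apply mul_le_mul (mul_le_mul_of_nonneg_left hsq (by positivity)) hc
              (abs_nonneg _) (by positivity)
        _ = (|b|/2) * Real.sqrt (2*π*(s+t)) := by ring
    linarith
  calc |Real.exp (-b ^ 2 * y / 2) / (π * Real.sqrt (y * (s + t - y)))| *
        |Real.exp (-b ^ 2 * (s + t - y) / 2) +
          (b / 2) * Real.sqrt (2 * π * (s + t - y)) *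
            (2 * gaussCdf (b * Real.sqrt (s + t - y)) - 1)|
      ≤ (1 / (π * (Real.sqrt y * Real.sqrt t))) * (1 + (|b|/2) * Real.sqrt (2*π*(s+t))) :=
        mul_le_mul hA hB (abs_nonneg _) (by positivity)
    _ = (π * Real.sqrt t)⁻¹ * (1 + (|b|/2) * Real.sqrt (2*π*(s+t))) * (Real.sqrt y)⁻¹ := by
        rw [one_div, mul_inv, mul_inv]; ring

theorem stmt3 (b s : ℝ) (hs : 0 < s) (t : ℝ) (ht : 0 < t) :
    HasDerivAt (fun t' => ∫ y in (0 : ℝ)..s, psi b (s + t') y)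
      (-(Real.exp (-b ^ 2 * (s + t) / 2) * Real.sqrt s / (π * (s + t) * Real.sqrt t))) t := by
  have hts : (0:ℝ) < t/2 := by linarith
  have hsub : Set.uIoc (0:ℝ) s = Ioc 0 s := uIoc_of_le hs.le
  have hmeasIoc : MeasurableSet (Ioc (0:ℝ) s) := measurableSet_Ioc
  -- measurability of F near t
  have hF_meas : ∀ᶠ t' in nhds t, AEStronglyMeasurable (fun y => psi b (s + t') y)
      (volume.restrict (Set.uIoc (0:ℝ) s)) := by
    filter_upwards [eventually_gt_nhds ht] with t' ht'
    rw [hsub]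
    exact (psi_contOn b s t' hs ht').aestronglyMeasurable hmeasIoc
  set F' : ℝ → ℝ → ℝ := fun x y =>
    -(Real.exp (-b^2*(s+x)/2) / (2*π)) *
      ((Real.sqrt y)⁻¹ * ((Real.sqrt (s+x-y))⁻¹ * (s+x-y)⁻¹)) with hF'_def
  have hF_int : IntervalIntegrable (fun y => psi b (s + t) y) volume 0 s := by
    rw [intervalIntegrable_iff_integrableOn_Ioc_of_le hs.le]
    have hbd := (sqrt_inv_integrableOn s hs).const_mul
      ((π * Real.sqrt t)⁻¹ * (1 + (|b|/2) * Real.sqrt (2*π*(s+t))))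
    refine Integrable.mono hbd ((psi_contOn b s t hs ht).aestronglyMeasurable hmeasIoc) ?_
    refine (ae_restrict_iff' hmeasIoc).2 (Eventually.of_forall fun y hy => ?_)
    rw [Real.norm_eq_abs, Real.norm_eq_abs]
    refine (psi_bound b s t hs ht y hy).trans ?_
    exact le_trans (le_of_eq (by ring)) (le_abs_self _)
  have hF'_meas : AEStronglyMeasurable (F' t) (volume.restrict (Set.uIoc (0:ℝ) s)) := by
    rw [hsub]
    apply ContinuousOn.aestronglyMeasurable _ hmeasIoc
    apply ContinuousOn.mul continuousOn_const
    apply ContinuousOn.mul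
    · apply ContinuousOn.inv₀ (by fun_prop)
      intro y hy; have := hy.1; positivity
    · apply ContinuousOn.mul
      · apply ContinuousOn.inv₀ (by fun_prop)
        intro y hy
        have h2 : 0 < s + t - y := by have := hy.2; linarith
        positivity
      · apply ContinuousOn.inv₀ (by fun_prop)
        intro y hy
        have h2 : 0 < s + t - y := by have := hy.2; linarith
        exact h2.ne'
  have h_bound : ∀ᵐ y ∂volume, y ∈ Set.uIoc (0:ℝ) s → ∀ x ∈ Metric.ball t (t/2),
      ‖F' x y‖ ≤ (1/(2*π)) * ((Real.sqrt (t/2))⁻¹ * (t/2)⁻¹) * (Real.sqrt y)⁻¹ := by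
    refine Eventually.of_forall fun y hy x hx => ?_
    rw [hsub] at hy
    have hy1 : 0 < y := hy.1
    have hy2 : y ≤ s := hy.2
    have hxd : |x - t| < t/2 := by simpa [Real.dist_eq] using hx
    have hx1 : t/2 < x := by have := abs_lt.1 hxd; linarith [this.1]
    have hw : t/2 < s + x - y := by linarith
    have hwpos : 0 < s + x - y := lt_trans hts hw
    have hxpos : 0 < x := lt_trans hts hx1
    rw [hF'_def]
    simp only []
    rw [Real.norm_eq_abs, neg_mul, abs_neg, abs_mul,
      abs_of_nonneg (by positivity : (0:ℝ) ≤ Real.exp (-b^2*(s+x)/2) / (2*π)),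
      abs_of_nonneg (by positivity)]
    have he : Real.exp (-b^2*(s+x)/2) ≤ 1 :=
      Real.exp_le_one_iff.2 (by nlinarith [sq_nonneg b])
    have h1 : (Real.sqrt (s+x-y))⁻¹ ≤ (Real.sqrt (t/2))⁻¹ :=
      inv_anti₀ (Real.sqrt_pos.2 hts) (Real.sqrt_le_sqrt hw.le)
    have h2 : (s+x-y)⁻¹ ≤ (t/2)⁻¹ := inv_anti₀ hts hw.le
    calc Real.exp (-b^2*(s+x)/2) / (2*π) *
          ((Real.sqrt y)⁻¹ * ((Real.sqrt (s+x-y))⁻¹ * (s+x-y)⁻¹))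
        ≤ (1 / (2*π)) * ((Real.sqrt y)⁻¹ * ((Real.sqrt (t/2))⁻¹ * (t/2)⁻¹)) := by
          apply mul_le_mul
          · exact div_le_div_of_nonneg_right he (by positivity) |>.trans_eq rfl
          · exact mul_le_mul_of_nonneg_left
              (mul_le_mul h1 h2 (by positivity) (by positivity)) (by positivity)
          · positivity
          · positivity
      _ = (1/(2*π)) * ((Real.sqrt (t/2))⁻¹ * (t/2)⁻¹) * (Real.sqrt y)⁻¹ := by ring
  have bound_int : IntervalIntegrable
      (fun y => (1/(2*π)) * ((Real.sqrt (t/2))⁻¹ * (t/2)⁻¹) * (Real.sqrt y)⁻¹) volume 0 s := by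
    rw [intervalIntegrable_iff_integrableOn_Ioc_of_le hs.le]
    exact (sqrt_inv_integrableOn s hs).const_mul _
  have h_diff : ∀ᵐ y ∂volume, y ∈ Set.uIoc (0:ℝ) s → ∀ x ∈ Metric.ball t (t/2),
      HasDerivAt (fun t' => psi b (s + t') y) (F' x y) x := by
    refine Eventually.of_forall fun y hy x hx => ?_
    rw [hsub] at hy
    have hxd : |x - t| < t/2 := by simpa [Real.dist_eq] using hx
    have hx1 : 0 < x := by have := abs_lt.1 hxd; linarith [this.1]
    exact psi_hasDerivAt b s y x hy.1 hy.2 hx1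
  obtain ⟨-, hder⟩ := intervalIntegral.hasDerivAt_integral_of_dominated_loc_of_deriv_le
    (Metric.ball_mem_nhds t hts) hF_meas hF_int hF'_meas h_bound bound_int h_diff
  refine hder.congr_deriv ?_
  have hc : (∫ y in (0:ℝ)..s, F' t y)
      = -(Real.exp (-b^2*(s+t)/2) / (2*π)) *
        ∫ y in (0:ℝ)..s, (Real.sqrt y)⁻¹ * ((Real.sqrt (s+t-y))⁻¹ * (s+t-y)⁻¹) := by
    rw [← intervalIntegral.integral_const_mul]
  rw [hc, key_integral s t hs ht]
  have hπ : π ≠ 0 := Real.pi_ne_zero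
  have hst : s + t ≠ 0 := by positivity
  have hsqt : Real.sqrt t ≠ 0 := by positivity
  field_simp
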